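/- arXiv:2101.11541 — 4 statements merged into one kernel-verified Lean document; each statement's English description precedes it below -/
import Mathlib

section
/- Let G be a finite group, N a normal subgroup, and suppose that for every g ∈ N the conjugacy class of g in G equals g·[g,G]. Then N is contained in the hypercenter Z_∞(G) of G. In particular, N is nilpotent. -/
open scoped commutatorElement

/-- The subgroup `[g,G]` generated by the commutators `[g,x]`, `x ∈ G`. -/
def commSub {G : Type*} [Group G] (g : G) : Subgroup G :=
  Subgroup.closure {c | ∃ x : G, c = ⁅g, x⁆}

/-- The conjugacy class of `g` in `G`. -/
def conjClass {G : Type*} [Group G] (g : G) : Set G := {h | IsConj g h}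

/-- `g` is flat in `G` if its conjugacy class is the coset `g[g,G]`. -/
def IsFlat {G : Type*} [Group G] (g : G) : Prop :=
  conjClass g = (g * ·) '' (commSub g : Set G)

section Aux

variable {G : Type*} [Group G]

lemma commutator_mem_commSub (g x : G) : ⁅g, x⁆ ∈ commSub g :=
  Subgroup.subset_closure ⟨x, rfl⟩

lemma commSub_conj_mem (g : G) {k : G} (hk : k ∈ commSub g) (y : G) :
    y * k * y⁻¹ ∈ commSub g := by
  have hmap : (commSub g).map (MulAut.conj y).toMonoidHom ≤ commSub g := by
    rw [commSub, MonoidHom.map_closure]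
    apply Subgroup.closure_le _ |>.mpr
    rintro c ⟨d, ⟨x, rfl⟩, rfl⟩
    have key : (MulAut.conj y).toMonoidHom ⁅g, x⁆ = ⁅g, y⁆⁻¹ * ⁅g, y * x⁆ := by
      simp only [MulAut.conj_apply, MulEquiv.toMonoidHom_eq_coe, MonoidHom.coe_coe,
        commutatorElement_def]
      group
    rw [key]
    exact Subgroup.mul_mem _ (Subgroup.inv_mem _ (commutator_mem_commSub g y))
      (commutator_mem_commSub g (y * x))
  exact hmap ⟨k, hk, rfl⟩

lemma commSub_le_of_mem {g k : G} (hk : k ∈ commSub g) : commSub k ≤ commSub g := by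
  apply Subgroup.closure_le _ |>.mpr
  rintro c ⟨x, rfl⟩
  have : ⁅k, x⁆ = k * (x * k⁻¹ * x⁻¹) := by rw [commutatorElement_def]; group
  rw [this]
  exact Subgroup.mul_mem _ hk (commSub_conj_mem g (Subgroup.inv_mem _ hk) x)

lemma commSub_le_normal {N : Subgroup G} [N.Normal] {g : G} (hg : g ∈ N) :
    commSub g ≤ N := by
  apply Subgroup.closure_le _ |>.mpr
  rintro c ⟨x, rfl⟩
  have : ⁅g, x⁆ = g * (x * g⁻¹ * x⁻¹) := by rw [commutatorElement_def]; group
  rw [this]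
  exact N.mul_mem hg (‹N.Normal›.conj_mem _ (N.inv_mem hg) x)

/-- A flat element which lies in its own `[g,G]` is trivial. -/
lemma eq_one_of_flat_mem_commSub {k : G} (hf : IsFlat k) (hk : k ∈ commSub k) : k = 1 := by
  have h1 : (1 : G) ∈ conjClass k := by
    rw [hf]
    exact ⟨k⁻¹, Subgroup.inv_mem _ hk, mul_inv_cancel k⟩
  exact isConj_one_left.mp h1

/-- If all elements of `N` are flat and `g ∈ N` is nontrivial, there is a nontrivial
central element in `N`. -/
lemma exists_central_aux :
    ∀ (m : ℕ) {G : Type*} [Group G] [Fintype G] (N : Subgroup G), N.Normal →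
      (∀ g ∈ N, IsFlat g) → ∀ g ∈ N, g ≠ 1 → Nat.card (commSub g) ≤ m →
      ∃ z, z ∈ N ∧ z ≠ 1 ∧ z ∈ Subgroup.center G := by
  intro m
  induction m with
  | zero =>
    intro G _ _ N _ _ g _ _ hcard
    have := Nat.card_pos (α := commSub g); omega
  | succ m ih =>
    intro G _ _ N hN hflat g hgN hg1 hcard
    by_cases hc : ∀ x : G, ⁅g, x⁆ = 1
    · refine ⟨g, hgN, hg1, Subgroup.mem_center_iff.mpr fun x => ?_⟩
      have := hc x
      rw [commutatorElement_def] at this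
      have : g * x = x * g := by
        have h2 : g * x * g⁻¹ * x⁻¹ * (x * g) = 1 * (x * g) := by rw [this]
        group at h2
        simpa using h2
      exact this.symm
    · push_neg at hc
      obtain ⟨x, hx⟩ := hc
      set k := ⁅g, x⁆ with hk
      have hkK : k ∈ commSub g := commutator_mem_commSub g x
      have hkN : k ∈ N := commSub_le_normal hgN hkK
      have hle : commSub k ≤ commSub g := commSub_le_of_mem hkK
      have hne : commSub k ≠ commSub g := by
        intro heq
        exact hx (eq_one_of_flat_mem_commSub (hflat k hkN) (heq ▸ hkK))
      have hlt : commSub k < commSub g := lt_of_le_of_ne hle hne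
      have hcards : Nat.card (commSub k) < Nat.card (commSub g) := by
        show Nat.card ((commSub k : Set G)) < Nat.card ((commSub g : Set G))
        rw [Nat.card_coe_set_eq, Nat.card_coe_set_eq]
        refine Set.ncard_lt_ncard ?_ (Set.toFinite _)
        exact Set.ssubset_iff_of_subset (fun a ha => hle ha) |>.mpr <| by
          obtain ⟨a, ha, hna⟩ := SetLike.exists_of_lt hlt
          exact ⟨a, ha, hna⟩
      exact ih N hN hflat k hkN hx (by omega)

/-- Flatness passes to images under surjective homomorphisms. -/
lemma isFlat_map {G H : Type*} [Group G] [Group H] (f : G →* H)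
    (hf : Function.Surjective f) {g : G} (hg : IsFlat g) : IsFlat (f g) := by
  have hconj : conjClass (f g) = f '' conjClass g := by
    ext h
    constructor
    · intro hconj
      obtain ⟨c, hc⟩ := isConj_iff.mp hconj
      obtain ⟨y, rfl⟩ := hf c
      refine ⟨y * g * y⁻¹, isConj_iff.mpr ⟨y, rfl⟩, ?_⟩
      rw [← hc]
      simp [map_mul, map_inv]
    · rintro ⟨a, ha, rfl⟩
      obtain ⟨c, hc⟩ := isConj_iff.mp ha
      exact isConj_iff.mpr ⟨f c, by rw [← hc]; simp [map_mul, map_inv]⟩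
  have hcomm : (commSub (f g) : Set H) = f '' (commSub g : Set G) := by
    have : commSub (f g) = (commSub g).map f := by
      rw [commSub, commSub, MonoidHom.map_closure]
      congr 1
      ext c
      constructor
      · rintro ⟨x', rfl⟩
        obtain ⟨x, rfl⟩ := hf x'
        exact ⟨⁅g, x⁆, ⟨x, rfl⟩, by simp [commutatorElement_def]⟩
      · rintro ⟨d, ⟨x, rfl⟩, rfl⟩
        exact ⟨f x, by simp [commutatorElement_def]⟩
    rw [this]
    rfl
  rw [IsFlat, hconj, hg, hcomm, Set.image_image, Set.image_image]
  simp

/-- For `Z ≤ Z(G)`, the preimage of `Z_n(G/Z)` is inside `Z_{n+1}(G)`. -/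
lemma comap_ucs_le {G : Type*} [Group G] (Z : Subgroup G) [Z.Normal]
    (hZ : Z ≤ Subgroup.center G) :
    ∀ n, (upperCentralSeries (G ⧸ Z) n).comap (QuotientGroup.mk' Z) ≤
      upperCentralSeries G (n + 1) := by
  intro n
  induction n with
  | zero =>
    intro x hx
    simp only [Subgroup.mem_comap, upperCentralSeries_zero, Subgroup.mem_bot] at hx
    have hxZ : x ∈ Z := (QuotientGroup.eq_one_iff x).mp hx
    unfold upperCentralSeries
    rw [upperCentralSeries_one]
    exact hZ hxZ
  | succ n ihn =>
    intro x hx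
    simp only [Subgroup.mem_comap] at hx
    unfold upperCentralSeries at hx ⊢
    rw [mem_upperCentralSeries_succ_iff] at hx ⊢
    intro y
    apply ihn
    simp only [Subgroup.mem_comap]
    simpa [upperCentralSeries] using hx (QuotientGroup.mk' Z y)

lemma main_aux :
    ∀ (m : ℕ) {G : Type*} [Group G] [Fintype G] (N : Subgroup G), N.Normal →
      (∀ g ∈ N, IsFlat g) → Nat.card N ≤ m →
      ∃ n, N ≤ upperCentralSeries G n := by
  intro m
  induction m with
  | zero =>
    intro G _ _ N _ _ hcard
    have := Nat.card_pos (α := N); omega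
  | succ m ih =>
    intro G _ _ N hN hflat hcard
    by_cases htriv : ∀ g ∈ N, g = (1 : G)
    · refine ⟨0, fun g hg => ?_⟩
      unfold upperCentralSeries
      rw [upperCentralSeries_zero]
      simpa using htriv g hg
    · push_neg at htriv
      obtain ⟨g, hgN, hg1⟩ := htriv
      obtain ⟨z, hzN, hz1, hzC⟩ :=
        exists_central_aux (Nat.card (commSub g)) N hN hflat g hgN hg1 le_rfl
      set Z := Subgroup.zpowers z with hZdef
      have hZle : Z ≤ Subgroup.center G := Subgroup.zpowers_le.mpr hzC
      have hZN : Z ≤ N := Subgroup.zpowers_le.mpr hzN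
      have : Z.Normal := by
        constructor
        intro w hw y
        have : y * w = w * y := Subgroup.mem_center_iff.mp (hZle hw) y
        rw [this]
        simpa using hw
      have : Fintype (G ⧸ Z) := Fintype.ofFinite _
      set φ := QuotientGroup.mk' Z with hφdef
      have hφsurj : Function.Surjective φ := QuotientGroup.mk'_surjective Z
      set N' := N.map φ with hN'def
      have hN'normal : N'.Normal := Subgroup.Normal.map hN φ hφsurj
      have hflat' : ∀ q ∈ N', IsFlat q := by
        rintro q ⟨g', hg', rfl⟩
        exact isFlat_map φ hφsurj (hflat g' hg')
      -- card N' < card N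
      have hcard' : Nat.card N' < Nat.card N := by
        set ψ : N → N' := fun n => ⟨φ n, n, n.2, rfl⟩ with hψ
        have hψsurj : Function.Surjective ψ := by
          rintro ⟨q, g', hg', rfl⟩
          exact ⟨⟨g', hg'⟩, rfl⟩
        have hle : Nat.card N' ≤ Nat.card N := Nat.card_le_card_of_surjective ψ hψsurj
        rcases lt_or_eq_of_le hle with h | h
        · exact h
        · exfalso
          have hbij : Function.Bijective ψ :=
            (Nat.bijective_iff_surjective_and_card ψ).mpr ⟨hψsurj, h.symm⟩
          have : ψ ⟨z, hzN⟩ = ψ 1 := by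
            apply Subtype.ext
            show φ z = φ (1 : G)
            simp only [map_one]
            exact (QuotientGroup.eq_one_iff z).mpr (Subgroup.mem_zpowers z)
          exact hz1 (Subtype.ext_iff.mp (hbij.injective this))
      obtain ⟨n, hn⟩ := ih N' hN'normal hflat' (by omega)
      refine ⟨n + 1, fun a ha => ?_⟩
      apply comap_ucs_le Z hZle n
      exact hn ⟨a, ha, rfl⟩

/-- A subgroup contained in a term of the upper central series is nilpotent. -/
lemma nilpotent_of_le_ucs {G : Type*} [Group G] (N : Subgroup G) (n : ℕ)
    (hle : N ≤ upperCentralSeries G n) : Group.IsNilpotent N := by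
  rw [nilpotent_iff_lowerCentralSeries]
  refine ⟨n, ?_⟩
  have key : ∀ j : ℕ, ((⊤ : Subgroup N).lowerCentralSeries j).map N.subtype ≤ upperCentralSeries G (n - j) := by
    intro j
    induction j with
    | zero =>
      rw [lowerCentralSeries_zero, ← MonoidHom.range_eq_map, Subgroup.range_subtype]
      simpa using hle
    | succ j ihj =>
      have hstep : ((⊤ : Subgroup N).lowerCentralSeries j).map N.subtype ≤ upperCentralSeries G (n - j - 1 + 1) := by
        refine ihj.trans (upperCentralSeries_mono G ?_)
        omega
      rw [lowerCentralSeries_succ, Subgroup.commutator_def, MonoidHom.map_closure]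
      apply Subgroup.closure_le _ |>.mpr
      rintro c ⟨d, ⟨p, hp, q, _, rfl⟩, rfl⟩
      have hpG : (p : G) ∈ upperCentralSeries G (n - j - 1 + 1) := hstep ⟨p, hp, rfl⟩
      have : n - (j + 1) = n - j - 1 := by omega
      rw [this]
      have := (mem_upperCentralSeries_succ_iff).mp hpG (q : G)
      simpa [upperCentralSeries] using this
  have hbot := key n
  simp only [Nat.sub_self, upperCentralSeries_zero] at hbot
  rw [eq_bot_iff]
  intro a ha
  have : (N.subtype a) ∈ (⊥ : Subgroup G) := hbot ⟨a, ha, rfl⟩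
  simp only [Subgroup.mem_bot] at this ⊢
  exact Subtype.ext this

end Aux

theorem flat_subgroup_le_hypercenter {G : Type*} [Group G] [Fintype G]
    (N : Subgroup G) [N.Normal] (h : ∀ g ∈ N, IsFlat g) :
    (N ≤ ⨆ n, upperCentralSeries G n) ∧ Group.IsNilpotent N := by
  obtain ⟨n, hn⟩ := main_aux (Nat.card N) N ‹N.Normal› h le_rfl
  exact ⟨hn.trans (le_iSup (upperCentralSeries G) n), nilpotent_of_le_ucs N n hn⟩
end

section
/- Let G be a finite group, N a normal subgroup, and suppose that every element of N \ Z(N) is flat in G (i.e., cl_G(g) = g[g,G] for all g ∈ N with g ∉ Z(N)). Then N is nilpotent. -/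
open scoped commutatorElement

section helpers
variable {G : Type*} [Group G] {H : Type*} [Group H]

lemma commSub_normal (g : G) : (commSub g).Normal := by
  constructor
  intro n hn h
  have key : ((commSub g).map (MulAut.conj h).toMonoidHom : Subgroup G) ≤ commSub g := by
    rw [commSub, MonoidHom.map_closure, Subgroup.closure_le]
    rintro - ⟨-, ⟨x, rfl⟩, rfl⟩
    have hid : (MulAut.conj h).toMonoidHom ⁅g, x⁆ = ⁅g, h⁆⁻¹ * ⁅g, h * x⁆ := by
      simp only [MulAut.conj_apply, MulEquiv.coe_toMonoidHom, commutatorElement_def]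
      group
    rw [hid]
    exact mul_mem (inv_mem (Subgroup.subset_closure ⟨h, rfl⟩))
      (Subgroup.subset_closure ⟨h * x, rfl⟩)
  exact key ⟨n, hn, rfl⟩

lemma commSub_le {g : G} {M : Subgroup G} [hM : M.Normal] (hg : g ∈ M) : commSub g ≤ M := by
  rw [commSub, Subgroup.closure_le]
  rintro - ⟨x, rfl⟩
  have : ⁅g, x⁆ = g * (x * g⁻¹ * x⁻¹) := by group
  rw [this]
  exact mul_mem hg (hM.conj_mem _ (inv_mem hg) x)

lemma conjClass_map (φ : G →* H) (hφ : Function.Surjective φ) (g : G) :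
    conjClass (φ g) = φ '' conjClass g := by
  ext b
  constructor
  · intro hb
    obtain ⟨c, hc⟩ := isConj_iff.mp hb
    obtain ⟨y, rfl⟩ := hφ c
    exact ⟨y * g * y⁻¹, isConj_iff.mpr ⟨y, rfl⟩, by simp [hc.symm]⟩
  · rintro ⟨a, ha, rfl⟩
    obtain ⟨c, hc⟩ := isConj_iff.mp ha
    exact isConj_iff.mpr ⟨φ c, by rw [← hc]; simp⟩

lemma commSub_map (φ : G →* H) (hφ : Function.Surjective φ) (g : G) :
    commSub (φ g) = (commSub g).map φ := by
  rw [commSub, commSub, MonoidHom.map_closure]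
  congr 1
  ext c
  constructor
  · rintro ⟨x, rfl⟩
    obtain ⟨y, rfl⟩ := hφ x
    exact ⟨⁅g, y⁆, ⟨y, rfl⟩, by rw [map_commutatorElement]⟩
  · rintro ⟨-, ⟨y, rfl⟩, rfl⟩
    exact ⟨φ y, by rw [map_commutatorElement]⟩

lemma IsFlat.map {g : G} (hg : IsFlat g) (φ : G →* H) (hφ : Function.Surjective φ) :
    IsFlat (φ g) := by
  unfold IsFlat at *
  rw [conjClass_map φ hφ, commSub_map φ hφ, hg, ← Set.image_comp]
  rw [Subgroup.coe_map, ← Set.image_comp]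
  apply Set.image_congr
  intro a _
  simp

end helpers

universe u

lemma flat_aux (n : ℕ) : ∀ {G : Type u} [Group G] [Finite G] (N : Subgroup G), N.Normal →
    Nat.card ↥N ≤ n →
    (∀ g ∈ N, g ∉ Subgroup.map N.subtype (Subgroup.center ↥N) → IsFlat g) →
    Group.IsNilpotent ↥N := by
  induction n using Nat.strong_induction_on with
  | _ n ih =>
  intro G _ _ N hNormal hcard hflat
  haveI := hNormal
  by_cases hN : N = ⊥
  · subst hN
    infer_instance
  · obtain ⟨M, ⟨hMnorm, hMN, hMne⟩, hmin⟩ :=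
      (IsWellFounded.wf (r := ((· < ·) : Subgroup G → Subgroup G → Prop))).has_min
        {H | H.Normal ∧ H ≤ N ∧ H ≠ ⊥} ⟨N, ‹N.Normal›, le_refl N, hN⟩
    haveI := hMnorm
    have hZ : ∀ g ∈ M, g ∈ Subgroup.map N.subtype (Subgroup.center ↥N) := by
      intro g hgM
      by_contra hgZ
      have hgN : g ∈ N := hMN hgM
      have hfl := hflat g hgN hgZ
      have hKle : commSub g ≤ M := commSub_le hgM
      by_cases hK : commSub g = ⊥
      · have hcentral : ∀ x : G, x * g * x⁻¹ = g := by
          intro x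
          have hx : x * g * x⁻¹ ∈ conjClass g := isConj_iff.mpr ⟨x, rfl⟩
          rw [hfl, hK] at hx
          obtain ⟨k, hk, hkeq⟩ := hx
          have hk1 : k = 1 := hk
          subst hk1
          simpa using hkeq.symm
        apply hgZ
        refine ⟨⟨g, hgN⟩, ?_, rfl⟩
        simp only [SetLike.mem_coe, Subgroup.mem_center_iff]
        intro m
        have h1 : (m : G) * g * (m : G)⁻¹ = g := hcentral m
        have h2 : (m : G) * g = g * (m : G) := by
          rw [mul_inv_eq_iff_eq_mul] at h1; exact h1
        exact Subtype.ext h2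
      · have hKM : commSub g = M := by
          rcases hKle.lt_or_eq with hlt | heq
          · exact absurd hlt (hmin (commSub g) ⟨commSub_normal g, hKle.trans hMN, hK⟩)
          · exact heq
        have h1 : (1 : G) ∈ conjClass g := by
          rw [hfl]
          exact ⟨g⁻¹, by rw [hKM]; exact inv_mem hgM, mul_inv_cancel g⟩
        have hg1 : g = 1 := isConj_one_left.mp h1
        rw [hg1] at hgZ
        exact hgZ (one_mem _)
    set π := QuotientGroup.mk' M with hπ
    have hπs : Function.Surjective π := QuotientGroup.mk'_surjective M
    have hNmapNormal : (N.map π).Normal := Subgroup.Normal.map ‹N.Normal› π hπs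
    set ψ := π.subgroupMap N with hψ
    have hψs : Function.Surjective ψ := π.subgroupMap_surjective N
    have hker : ∀ x : ↥N, x ∈ ψ.ker → (x : G) ∈ M := by
      intro x hx
      have h1 : ψ x = 1 := hx
      have : π (x : G) = 1 := by
        rw [show π (x : G) = ((ψ x : ↥(Subgroup.map π N)) : G ⧸ M) from rfl, h1]
        rfl
      exact (QuotientGroup.eq_one_iff _).mp this
    have hkerZ : ψ.ker ≤ Subgroup.center ↥N := by
      intro x hx
      obtain ⟨z, hz, hzx⟩ := hZ _ (hker x hx)
      have : z = x := Subtype.ext hzx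
      rwa [← this]
    have hcard2 : Nat.card ↥(N.map π) < Nat.card ↥N := by
      have hEq : Nat.card ↥N = Nat.card ↥(N.map π) * Nat.card ψ.ker := by
        rw [Subgroup.card_eq_card_quotient_mul_card_subgroup ψ.ker]
        congr 1
        exact Nat.card_congr (QuotientGroup.quotientKerEquivOfSurjective ψ hψs).toEquiv
      have hMnontriv : ∃ m : G, m ∈ M ∧ m ≠ 1 := by
        by_contra hcon
        push_neg at hcon
        exact hMne (Subgroup.eq_bot_iff_forall M |>.mpr fun x hx => by
          by_contra hx1; exact hx1 (by
            rcases eq_or_ne x 1 with h | h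
            · exact h
            · exact absurd h (by simpa using hcon x hx)))
        
      obtain ⟨m, hmM, hm1⟩ := hMnontriv
      have hmker : (⟨m, hMN hmM⟩ : ↥N) ∈ ψ.ker := by
        have hπm : π m = 1 := (QuotientGroup.eq_one_iff _).mpr hmM
        show ψ _ = 1
        exact Subtype.ext hπm
      haveI : Nontrivial ψ.ker := by
        refine ⟨⟨⟨⟨m, hMN hmM⟩, hmker⟩, 1, ?_⟩⟩
        intro hcon
        apply hm1
        have := congrArg (fun x : ψ.ker => ((x : ↥N) : G)) hcon
        simpa using this
      have h2 : 1 < Nat.card ψ.ker := Finite.one_lt_card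
      have hpos : 0 < Nat.card ↥(N.map π) := Nat.card_pos
      calc Nat.card ↥(N.map π) < Nat.card ↥(N.map π) * Nat.card ψ.ker := by
            exact (Nat.lt_mul_iff_one_lt_right hpos).mpr h2
        _ = Nat.card ↥N := hEq.symm
    have hflat2 : ∀ g ∈ N.map π,
        g ∉ Subgroup.map (N.map π).subtype (Subgroup.center ↥(N.map π)) → IsFlat g := by
      rintro - ⟨x, hxN, rfl⟩ hgZ
      apply IsFlat.map _ π hπs
      apply hflat x hxN
      intro hx
      apply hgZ
      obtain ⟨z, hz, rfl⟩ := hx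
      refine ⟨ψ z, ?_, rfl⟩
      simp only [SetLike.mem_coe, Subgroup.mem_center_iff]
      intro b
      obtain ⟨a, rfl⟩ := hψs b
      rw [← map_mul, ← map_mul, (Subgroup.mem_center_iff.mp hz) a]
    have hnil : Group.IsNilpotent ↥(N.map π) :=
      ih (Nat.card ↥(N.map π)) (lt_of_lt_of_le hcard2 hcard) (N.map π) hNmapNormal le_rfl hflat2
    exact (haveI := hnil; isNilpotent_of_ker_le_center ψ hkerZ)

theorem nilpotent_of_flat_off_center {G : Type*} [Group G] [Fintype G]
    (N : Subgroup G) [N.Normal]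
    (h : ∀ g ∈ N, g ∉ Subgroup.map N.subtype (Subgroup.center ↥N) → IsFlat g) :
    Group.IsNilpotent N := by
  exact flat_aux (Nat.card ↥N) N ‹N.Normal› le_rfl h
end

section
/- Let G be a finite group and define R(G) as the largest normal subgroup R such that every character in Irr(G | R) has central type. Let V = {χ ∈ Irr(G) : V(χ) > Z(χ)} be the set of irreducible characters whose vanishing-off subgroup strictly contains their center. Then R(G) = ∩_{χ ∈ V} ker(χ). -/
open FDRep CategoryTheory

/-- The kernel of the character of `V`, as a set: elements where the character
takes the value `χ(1)`. -/
def charKer {G : Type} [Group G] [Fintype G] (V : FDRep ℂ G) : Set G :=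
  {g | V.character g = V.character 1}

/-- The center of the character of `V`: elements where `|χ(g)| = χ(1)`. -/
def charCenter {G : Type} [Group G] [Fintype G] (V : FDRep ℂ G) : Set G :=
  {g | ‖V.character g‖ = ‖V.character 1‖}

/-- A character is of central type if it vanishes off its center. -/
def IsCentralType {G : Type} [Group G] [Fintype G] (V : FDRep ℂ G) : Prop :=
  ∀ g, g ∉ charCenter V → V.character g = 0

/-- The vanishing-off subgroup of the character of . -/
def voff {G : Type} [Group G] [Fintype G] (V : FDRep ℂ G) : Subgroup G :=
  Subgroup.closure {g | V.character g ≠ 0}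

open Polynomial

set_option linter.unusedSectionVars false


lemma aux_root_pow {n : ℕ} (A : Matrix (Fin n) (Fin n) ℂ) {m : ℕ}
    (hAm : A ^ m = 1) {μ : ℂ} (hμ : μ ∈ A.charpoly.roots) : μ ^ m = 1 := by
  have hroot : A.charpoly.IsRoot μ := isRoot_of_mem_roots hμ
  have hmat : (Matrix.charmatrix A).map (evalRingHom μ)
      = algebraMap ℂ (Matrix (Fin n) (Fin n) ℂ) μ - A := by
    ext i j
    by_cases h : i = j
    · subst h
      simp [Matrix.charmatrix_apply_eq, Matrix.map_apply, Matrix.sub_apply,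
        Matrix.algebraMap_matrix_apply]
    · simp [Matrix.charmatrix_apply_ne _ _ _ h, Matrix.map_apply, Matrix.sub_apply,
        Matrix.algebraMap_matrix_apply, h]
  have hdet : (algebraMap ℂ (Matrix (Fin n) (Fin n) ℂ) μ - A).det = 0 := by
    have h0 : ((evalRingHom μ).mapMatrix (Matrix.charmatrix A)).det = 0 := by
      rw [← RingHom.map_det]; exact hroot
    rwa [RingHom.mapMatrix_apply, hmat] at h0
  have hspec : μ ∈ spectrum ℂ A := by
    rw [spectrum.mem_iff]
    intro hu
    rw [Matrix.isUnit_iff_isUnit_det, hdet] at hu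
    exact not_isUnit_zero hu
  have h2 : μ ^ m ∈ spectrum ℂ (A ^ m) := spectrum.pow_image_subset A m ⟨μ, hspec, rfl⟩
  rw [hAm, spectrum.mem_iff] at h2
  by_contra hne
  apply h2
  rw [← map_one (algebraMap ℂ (Matrix (Fin n) (Fin n) ℂ)), ← map_sub]
  exact (isUnit_iff_ne_zero.mpr (sub_ne_zero.mpr hne)).map _


lemma aux_multiset_eq (s : Multiset ℂ) (h1 : ∀ z ∈ s, ‖z‖ = 1)
    (h2 : ‖s.sum‖ = s.card) :
    ∀ z ∈ s, (s.card : ℂ) * z = s.sum := by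
  intro z hz
  obtain ⟨t, rfl⟩ := Multiset.exists_cons_of_mem hz
  set c : ℂ := (z ::ₘ t).sum with hc
  set n : ℕ := (z ::ₘ t).card with hn
  have hf_le : ∀ w ∈ z ::ₘ t, ((w * (starRingEnd ℂ) c).re) ≤ (n : ℝ) := by
    intro w hw
    calc (w * (starRingEnd ℂ) c).re ≤ ‖w * (starRingEnd ℂ) c‖ := Complex.re_le_norm _
      _ = ‖w‖ * ‖c‖ := by rw [norm_mul, Complex.norm_conj]
      _ = (n : ℝ) := by rw [h1 w hw, h2, one_mul]
  have hsum : ((z ::ₘ t).map (fun w => (w * (starRingEnd ℂ) c).re)).sum = (n : ℝ) ^ 2 := by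
    have e1 : ((z ::ₘ t).map (fun w => w * (starRingEnd ℂ) c)).sum = c * (starRingEnd ℂ) c := by
      rw [Multiset.sum_map_mul_right]
      simp [hc]
    have e2 := map_multiset_sum Complex.reAddGroupHom ((z ::ₘ t).map (fun w => w * (starRingEnd ℂ) c))
    rw [Multiset.map_map, e1] at e2
    have e3 : ((z ::ₘ t).map (fun w => (w * (starRingEnd ℂ) c).re)).sum
        = (c * (starRingEnd ℂ) c).re := e2.symm
    rw [e3, Complex.mul_conj]
    rw [Complex.ofReal_re, Complex.normSq_eq_norm_sq, h2]
  have hcardt : (t.card : ℝ) = (n : ℝ) - 1 := by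
    have : n = t.card + 1 := by simp [hn]
    rw [this]; push_cast; ring
  have ht_le : (t.map (fun w => (w * (starRingEnd ℂ) c).re)).sum ≤ t.card • (n : ℝ) := by
    have h4 := Multiset.sum_le_card_nsmul (t.map (fun w => (w * (starRingEnd ℂ) c).re)) (n : ℝ) (by
      intro x hx
      obtain ⟨w, hw, rfl⟩ := Multiset.mem_map.mp hx
      exact hf_le w (Multiset.mem_cons_of_mem hw))
    rwa [Multiset.card_map] at h4
  have hz_le : (z * (starRingEnd ℂ) c).re ≤ (n : ℝ) := hf_le z (Multiset.mem_cons_self _ _)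
  have hsplit : ((z ::ₘ t).map (fun w => (w * (starRingEnd ℂ) c).re)).sum
      = (z * (starRingEnd ℂ) c).re + (t.map (fun w => (w * (starRingEnd ℂ) c).re)).sum := by
    simp
  have hfz : (z * (starRingEnd ℂ) c).re = (n : ℝ) := by
    have hsm : (t.card : ℝ) * (n : ℝ) = ((n : ℝ) - 1) * n := by rw [hcardt]
    have := ht_le
    rw [nsmul_eq_mul] at this
    nlinarith [hsum, hsplit]
  -- now z * conj c = n
  have habs : ‖z * (starRingEnd ℂ) c‖ = (n : ℝ) := by
    rw [norm_mul, Complex.norm_conj, h1 z hz, h2, one_mul]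
  have him : (z * (starRingEnd ℂ) c).im = 0 := by
    have h3 : Complex.normSq (z * (starRingEnd ℂ) c) = (n : ℝ) ^ 2 := by
      rw [Complex.normSq_eq_norm_sq, habs]
    rw [Complex.normSq_apply, hfz] at h3
    nlinarith [h3]
  have hw : z * (starRingEnd ℂ) c = (n : ℝ) := by
    apply Complex.ext
    · rw [hfz]; simp
    · rw [him]; simp
  -- multiply by c
  have hcc : (starRingEnd ℂ) c * c = ((n : ℝ) : ℂ) ^ 2 := by
    rw [mul_comm, Complex.mul_conj, Complex.normSq_eq_norm_sq, h2]
    push_cast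
    ring
  have hn0 : (n : ℂ) ≠ 0 := by
    have : 0 < n := by simp [hn]
    exact_mod_cast Nat.cast_ne_zero.mpr this.ne'
  have key : z * (((n : ℝ) : ℂ) ^ 2) = ((n : ℝ) : ℂ) * c := by
    calc z * (((n : ℝ) : ℂ) ^ 2) = z * ((starRingEnd ℂ) c * c) := by rw [hcc]
      _ = (z * (starRingEnd ℂ) c) * c := by ring
      _ = ((n : ℝ) : ℂ) * c := by rw [hw]
  have hfin : (n : ℂ) * ((n : ℂ) * z) = (n : ℂ) * c := by
    push_cast at key
    linear_combination key
  exact mul_left_cancel₀ hn0 hfin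


lemma aux_matrix_scalar {n m : ℕ} (hm0 : m ≠ 0) (hn : n ≠ 0)
    (A : Matrix (Fin n) (Fin n) ℂ) (hAm : A ^ m = 1)
    (habs : ‖A.trace‖ = n) :
    ∃ ω : ℂ, ‖ω‖ = 1 ∧ A = ω • 1 ∧ A.trace = (n : ℂ) * ω := by
  set s : Multiset ℂ := A.charpoly.roots with hs
  have hsplit : A.charpoly.Splits := IsAlgClosed.splits A.charpoly
  have hcard : Multiset.card s = n := by
    rw [hs, (splits_iff_card_roots).mp hsplit, Matrix.charpoly_natDegree_eq_dim,
      Fintype.card_fin]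
  have htr : A.trace = s.sum := Matrix.trace_eq_sum_roots_charpoly A
  have h1 : ∀ μ ∈ s, ‖μ‖ = 1 := by
    intro μ hμ
    have hpow : μ ^ m = 1 := aux_root_pow A hAm hμ
    have habsp : ‖μ‖ ^ m = 1 := by rw [← norm_pow, hpow, norm_one]
    rcases lt_trichotomy (‖μ‖) 1 with h | h | h
    · exfalso
      have := pow_lt_one₀ (norm_nonneg μ) h hm0
      rw [habsp] at this; exact lt_irrefl _ this
    · exact h
    · exfalso
      have := one_lt_pow₀ h hm0
      rw [habsp] at this; exact lt_irrefl _ this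
  have h2 : ‖s.sum‖ = Multiset.card s := by
    rw [← htr, habs, hcard]
  have hall := aux_multiset_eq s h1 h2
  -- pick a root
  have hne : s ≠ 0 := by
    intro h0
    rw [h0] at hcard; simp at hcard; exact hn hcard.symm
  obtain ⟨ω, hω⟩ := Multiset.exists_mem_of_ne_zero hne
  have habsω : ‖ω‖ = 1 := h1 ω hω
  have hallω : ∀ μ ∈ s, μ = ω := by
    intro μ hμ
    have e1 := hall μ hμ
    have e2 := hall ω hω
    have hn0 : ((Multiset.card s : ℕ) : ℂ) ≠ 0 := by
      rw [hcard]; exact_mod_cast hn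
    exact mul_left_cancel₀ hn0 (e1.trans e2.symm)
  -- minpoly argument
  haveI : Nonempty (Fin n) := Fin.pos_iff_nonempty.mp (Nat.pos_of_ne_zero hn)
  have hint : IsIntegral ℂ A := ⟨A.charpoly, A.charpoly_monic, by
    rw [← aeval_def]; exact A.aeval_self_charpoly⟩
  set p : ℂ[X] := minpoly ℂ A with hp
  have hdvd1 : p ∣ X ^ m - 1 := minpoly.dvd ℂ A (by
    rw [map_sub, aeval_X_pow, map_one, hAm, sub_self])
  have hsep : (X ^ m - 1 : ℂ[X]).Separable := by
    have := Polynomial.separable_X_pow_sub_C (1 : ℂ)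
      (by exact_mod_cast hm0) one_ne_zero
    simpa using this
  have hpsep : p.Separable := hsep.of_dvd hdvd1
  have hnodup : p.roots.Nodup := Polynomial.nodup_roots hpsep
  have hsubset : p.roots ≤ s := Polynomial.roots.le_of_dvd A.charpoly_monic.ne_zero
    (Matrix.minpoly_dvd_charpoly A)
  have hproots : ∀ μ ∈ p.roots, μ = ω := fun μ hμ => hallω μ (Multiset.mem_of_le hsubset hμ)
  have hpsplits : p.Splits := IsAlgClosed.splits p
  have hpcard : p.roots.card = p.natDegree := (splits_iff_card_roots).mp hpsplits
  have hdeg : 0 < p.natDegree := minpoly.natDegree_pos hint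
  have hle : p.roots ≤ {ω} := (Multiset.le_iff_subset hnodup).mpr (fun x hx => by
    rw [Multiset.mem_singleton]; exact hproots x hx)
  have hcard1 : p.roots.card = 1 := by
    have hle' := Multiset.card_le_card hle
    simp at hle'
    omega
  have hroots_eq : p.roots = {ω} := by
    obtain ⟨a, ha⟩ := Multiset.card_eq_one.mp hcard1
    have : a = ω := hproots a (by rw [ha]; simp)
    rw [ha, this]
  have hpeq : p = X - C ω := by
    have := hpsplits.eq_prod_roots_of_monic (minpoly.monic hint)
    rw [hroots_eq] at this
    simpa using this
  have hAeq : A = ω • 1 := by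
    have h0 := minpoly.aeval ℂ A
    rw [← hp, hpeq, map_sub, aeval_X, aeval_C] at h0
    have h1' : A = algebraMap ℂ (Matrix (Fin n) (Fin n) ℂ) ω := eq_of_sub_eq_zero h0
    rw [h1', Algebra.algebraMap_eq_smul_one]
  refine ⟨ω, habsω, hAeq, ?_⟩
  rw [hAeq]
  rw [Matrix.trace_smul, Matrix.trace_one]
  simp [Fintype.card_fin]
  ring


lemma aux_end_scalar {W : Type} [AddCommGroup W] [Module ℂ W] [FiniteDimensional ℂ W]
    (φ : W →ₗ[ℂ] W) {m : ℕ} (hm0 : m ≠ 0) (hφ : φ ^ m = 1)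
    (habs : ‖LinearMap.trace ℂ W φ‖ = Module.finrank ℂ W) :
    ∃ ω : ℂ, ‖ω‖ = 1 ∧ φ = ω • 1 ∧
      LinearMap.trace ℂ W φ = (Module.finrank ℂ W : ℂ) * ω := by
  by_cases hn : Module.finrank ℂ W = 0
  · haveI : Subsingleton W := Module.finrank_zero_iff.mp hn
    refine ⟨1, by simp, Subsingleton.elim _ _, ?_⟩
    have h0 : φ = 0 := Subsingleton.elim _ _
    simp [h0, hn]
  · set b := Module.finBasis ℂ W with hb
    set e := LinearMap.toMatrixAlgEquiv b with he
    have hA : (e φ) ^ m = 1 := by rw [← map_pow, hφ, map_one]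
    have htr : LinearMap.trace ℂ W φ = (e φ).trace := by
      rw [LinearMap.trace_eq_matrix_trace ℂ b φ]; rfl
    obtain ⟨ω, h1, h2, h3⟩ := aux_matrix_scalar hm0 hn (e φ) hA (by rw [← htr]; exact habs)
    refine ⟨ω, h1, ?_, by rw [htr, h3]⟩
    apply e.injective
    rw [h2, map_smul, map_one]


variable {G : Type} [Group G] [Fintype G]

lemma aux_rho_pow_card (V : FDRep ℂ G) (g : G) : (V.ρ g) ^ (Fintype.card G) = 1 := by
  rw [← map_pow, pow_card_eq_one, map_one]

lemma aux_char_smul (V : FDRep ℂ G) (g : G) {ω : ℂ} (h : V.ρ g = ω • 1) :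
    V.character g = (Module.finrank ℂ V : ℂ) * ω := by
  show LinearMap.trace ℂ V (V.ρ g) = _
  rw [h, map_smul, LinearMap.trace_one]
  simp [mul_comm]

lemma aux_mem_charCenter_iff (V : FDRep ℂ G) (g : G) :
    g ∈ charCenter V ↔ ∃ ω : ℂ, ‖ω‖ = 1 ∧ V.ρ g = ω • 1 := by
  constructor
  · intro h
    have habs : ‖V.character g‖ = Module.finrank ℂ V := by
      have h' : ‖V.character g‖ = ‖V.character 1‖ := h
      rw [FDRep.char_one] at h'
      rw [h']
      simp
    obtain ⟨ω, h1, h2, _⟩ := aux_end_scalar (V.ρ g) Fintype.card_ne_zero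
      (aux_rho_pow_card V g) habs
    exact ⟨ω, h1, h2⟩
  · rintro ⟨ω, h1, h2⟩
    show ‖V.character g‖ = ‖V.character 1‖
    rw [aux_char_smul V g h2, FDRep.char_one]
    simp [h1]

lemma aux_mem_charKer_iff (V : FDRep ℂ G) (g : G) :
    g ∈ charKer V ↔ V.ρ g = 1 := by
  constructor
  · intro h
    have h' : V.character g = V.character 1 := h
    by_cases hn : Module.finrank ℂ V = 0
    · haveI : Subsingleton V := Module.finrank_zero_iff.mp hn
      exact Subsingleton.elim _ _
    · have habs : ‖V.character g‖ = Module.finrank ℂ V := by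
        rw [h', FDRep.char_one]; simp
      obtain ⟨ω, h1, h2, h3⟩ := aux_end_scalar (V.ρ g) Fintype.card_ne_zero
        (aux_rho_pow_card V g) habs
      have hω : ω = 1 := by
        have h3' : V.character g = (Module.finrank ℂ V : ℂ) * ω := h3
        rw [h', FDRep.char_one] at h3'
        have hN : ((Module.finrank ℂ V : ℂ)) ≠ 0 := Nat.cast_ne_zero.mpr hn
        field_simp at h3'
        exact h3'.symm
      rw [h2, hω, one_smul]
  · intro h
    show V.character g = V.character 1
    have : V.character g = (Module.finrank ℂ V : ℂ) * 1 := aux_char_smul V g (by rw [h, one_smul])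
    rw [this, FDRep.char_one, mul_one]

def kerSub (V : FDRep ℂ G) : Subgroup G where
  carrier := {g | V.ρ g = 1}
  one_mem' := by show V.ρ 1 = 1; rw [map_one]
  mul_mem' := by
    intro a b ha hb
    show V.ρ (a * b) = 1
    rw [map_mul, ha, hb, one_mul]
  inv_mem' := by
    intro a ha
    show V.ρ a⁻¹ = 1
    have h : V.ρ a⁻¹ * V.ρ a = 1 := by rw [← map_mul, inv_mul_cancel, map_one]
    rwa [ha, mul_one] at h

lemma kerSub_normal (V : FDRep ℂ G) : (kerSub V).Normal := by
  constructor
  intro a ha c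
  show V.ρ (c * a * c⁻¹) = 1
  have ha' : V.ρ a = 1 := ha
  rw [map_mul, map_mul, ha', mul_one, ← map_mul, mul_inv_cancel, map_one]

lemma kerSub_coe (V : FDRep ℂ G) : (kerSub V : Set G) = charKer V :=
  Set.ext fun g => ((aux_mem_charKer_iff V g).symm : _)

def centerSub (V : FDRep ℂ G) : Subgroup G where
  carrier := charCenter V
  one_mem' := (aux_mem_charCenter_iff V 1).mpr ⟨1, by simp, by rw [map_one, one_smul]⟩
  mul_mem' := by
    intro a b ha hb
    obtain ⟨ω₁, h1a, h2a⟩ := (aux_mem_charCenter_iff V a).mp ha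
    obtain ⟨ω₂, h1b, h2b⟩ := (aux_mem_charCenter_iff V b).mp hb
    refine (aux_mem_charCenter_iff V (a * b)).mpr ⟨ω₁ * ω₂, by simp [h1a, h1b], ?_⟩
    rw [map_mul, h2a, h2b, smul_mul_assoc, one_mul, smul_smul]
  inv_mem' := by
    intro a ha
    obtain ⟨ω, h1, h2⟩ := (aux_mem_charCenter_iff V a).mp ha
    have hωne : ω ≠ 0 := by intro h0; rw [h0] at h1; simp at h1
    refine (aux_mem_charCenter_iff V a⁻¹).mpr ⟨ω⁻¹, by simp [h1], ?_⟩
    have hinv : (ω • (1 : V →ₗ[ℂ] V)) * (ω⁻¹ • 1) = 1 := by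
      rw [smul_mul_assoc, one_mul, smul_smul, mul_inv_cancel₀ hωne, one_smul]
    calc V.ρ a⁻¹ = V.ρ a⁻¹ * ((ω • 1) * (ω⁻¹ • 1)) := by rw [hinv, mul_one]
      _ = (V.ρ a⁻¹ * V.ρ a) * (ω⁻¹ • 1) := by rw [← h2, mul_assoc]
      _ = ω⁻¹ • 1 := by rw [← map_mul, inv_mul_cancel, map_one, one_mul]

theorem R_eq_inter_kernels {G : Type} [Group G] [Fintype G]
    (R : Subgroup G) [R.Normal]
    (hRct : ∀ V : FDRep ℂ G, Simple V → ¬((R : Set G) ⊆ charKer V) → IsCentralType V)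
    (hmax : ∀ R' : Subgroup G, R'.Normal →
      (∀ V : FDRep ℂ G, Simple V → ¬((R' : Set G) ⊆ charKer V) → IsCentralType V) → R' ≤ R) :
    (R : Set G) =
      ⋂ V ∈ {V : FDRep ℂ G | Simple V ∧ ¬((voff V : Set G) ⊆ charCenter V)}, charKer V := by
  apply Set.Subset.antisymm
  · intro g hg
    simp only [Set.mem_iInter, Set.mem_setOf_eq]
    rintro V ⟨hsV, hvV⟩
    have hsub : (R : Set G) ⊆ charKer V := by
      by_contra hc
      have hct := hRct V hsV hc
      apply hvV
      have hle : voff V ≤ centerSub V := by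
        apply (Subgroup.closure_le (centerSub V)).mpr
        intro x hx
        by_contra hxc
        exact hx (hct x hxc)
      intro x hx
      exact hle hx
    exact hsub hg
  · intro g hg
    simp only [Set.mem_iInter, Set.mem_setOf_eq] at hg
    set K : Subgroup G := ⨅ (V : FDRep ℂ G) (_ : Simple V ∧ ¬((voff V : Set G) ⊆ charCenter V)),
      kerSub V with hK
    have hgK : g ∈ K := by
      rw [hK, Subgroup.mem_iInf]
      intro V
      rw [Subgroup.mem_iInf]
      intro hV
      exact (aux_mem_charKer_iff V g).mp (hg V hV)
    have hKnormal : K.Normal := by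
      constructor
      intro a ha c
      rw [hK, Subgroup.mem_iInf] at ha ⊢
      intro V
      specialize ha V
      rw [Subgroup.mem_iInf] at ha ⊢
      intro hV
      exact (kerSub_normal V).conj_mem a (ha hV) c
    have hcond : ∀ V : FDRep ℂ G, Simple V → ¬((K : Set G) ⊆ charKer V) → IsCentralType V := by
      intro V hs hnk
      have hle : (voff V : Set G) ⊆ charCenter V := by
        by_contra hvo
        apply hnk
        have hKle : K ≤ kerSub V := by
          rw [hK]
          exact iInf_le_of_le V (iInf_le _ ⟨hs, hvo⟩)
        intro x hx
        rw [← kerSub_coe V]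
        exact hKle hx
      intro x hx
      by_contra hx0
      exact hx (hle (Subgroup.subset_closure hx0))
    exact hmax K hKnormal hcond hgK
end

section
/- Let G be a finite group, N a normal subgroup, and suppose every irreducible character of G whose kernel does not contain N vanishes on G \ N. Then (G,N) is a Camina pair: for every g ∈ G \ N, the conjugacy class of g contains the coset gN. -/
open FDRep CategoryTheory

namespace CaminaAux

open MonoidAlgebra

variable {G : Type} [Group G] [Fintype G]

noncomputable section
set_option linter.unusedSectionVars false
set_option maxHeartbeats 1000000

/-! ### The character kernel lemma -/

lemma rho_eq_one_of_charKer (V : FDRep ℂ G)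
    (N : Subgroup G) (hker : ∀ n ∈ N, V.character n = V.character 1)
    {n : G} (hn : n ∈ N) : V.ρ n = 1 := by
  classical
  set H := Subgroup.zpowers n with hH
  haveI : Fintype H := inferInstance
  haveI : Invertible ((Fintype.card H : ℂ)) :=
    invertibleOfNonzero (by exact_mod_cast Fintype.card_ne_zero)
  set W : FDRep ℂ H := FDRep.of (V.ρ.comp H.subtype) with hW
  have hWc : ∀ h : H, W.character h = V.character (h : G) := fun h => rfl
  have hval : ∀ h : H, W.character h = V.character 1 := by
    intro h
    rw [hWc]
    exact hker _ (Subgroup.zpowers_le.mpr hn h.2)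
  have havg := FDRep.average_char_eq_finrank_invariants W
  have hsum : ∑ h : H, W.character h = (Fintype.card H : ℂ) * V.character 1 := by
    simp [hval, Finset.sum_const, mul_comm]
  rw [hsum] at havg
  have hd : (Module.finrank ℂ (Representation.invariants W.ρ) : ℂ)
      = (Module.finrank ℂ V : ℂ) := by
    rw [← havg, char_one]
    simp [smul_eq_mul, ← mul_assoc]
  have hfr : Module.finrank ℂ (Representation.invariants W.ρ) = Module.finrank ℂ W := by
    exact_mod_cast hd
  have htop : Representation.invariants W.ρ = ⊤ := Submodule.eq_top_of_finrank_eq hfr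
  ext v
  have hv : v ∈ Representation.invariants W.ρ := htop ▸ Submodule.mem_top
  have := hv ⟨n, Subgroup.mem_zpowers n⟩
  exact this

lemma char_mul_of_charKer (V : FDRep ℂ G)
    (N : Subgroup G) (hker : ∀ n ∈ N, V.character n = V.character 1)
    {n : G} (hn : n ∈ N) (g : G) : V.character (g * n) = V.character g := by
  have h1 : V.ρ n = 1 := rho_eq_one_of_charKer V N hker hn
  unfold FDRep.character
  rw [map_mul, h1, mul_one]

/-! ### Conjugacy classes and class sums -/

open Classical in
def cls (g : G) : Finset G := Finset.univ.filter (fun x => IsConj g x)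

lemma mem_cls {g x : G} : x ∈ cls g ↔ ∃ c : G, c * g * c⁻¹ = x := by
  classical simp [cls, isConj_iff]

lemma self_mem_cls (g : G) : g ∈ cls g := mem_cls.mpr ⟨1, by group⟩

def clOp (V : FDRep ℂ G) (g : G) : Module.End ℂ V := ∑ x ∈ cls g, V.ρ x

lemma conj_mem_cls {g x : G} (y : G) (hx : x ∈ cls g) : y * x * y⁻¹ ∈ cls g := by
  obtain ⟨c, rfl⟩ := mem_cls.mp hx
  exact mem_cls.mpr ⟨y * c, by group⟩

lemma clOp_comm (V : FDRep ℂ G) (g y : G) :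
    V.ρ y * clOp V g = clOp V g * V.ρ y := by
  have key : V.ρ y * clOp V g * V.ρ y⁻¹ = clOp V g := by
    rw [clOp, Finset.mul_sum, Finset.sum_mul]
    rw [show (∑ x ∈ cls g, V.ρ y * V.ρ x * V.ρ y⁻¹) = ∑ x ∈ cls g, V.ρ (y * x * y⁻¹) by
      refine Finset.sum_congr rfl fun x _ => by simp [map_mul]]
    exact Finset.sum_nbij' (fun x => y * x * y⁻¹) (fun x => y⁻¹ * x * y)
      (fun x hx => conj_mem_cls y hx)
      (fun x hx => by simpa using conj_mem_cls y⁻¹ hx)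
      (fun x _ => by group) (fun x _ => by group) (fun x _ => rfl)
  calc V.ρ y * clOp V g = V.ρ y * clOp V g * V.ρ y⁻¹ * V.ρ y := by
        rw [mul_assoc (V.ρ y * clOp V g), ← map_mul]; simp
    _ = clOp V g * V.ρ y := by rw [key]

lemma trace_clOp (V : FDRep ℂ G) (g : G) :
    LinearMap.trace ℂ V (clOp V g) = ((cls g).card : ℂ) * V.character g := by
  rw [clOp, map_sum]
  rw [show (∑ x ∈ cls g, LinearMap.trace ℂ V (V.ρ x)) = ∑ x ∈ cls g, V.character g by
    refine Finset.sum_congr rfl fun x hx => ?_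
    obtain ⟨c, rfl⟩ := mem_cls.mp hx
    exact V.char_conj g c]
  simp [Finset.sum_const, mul_comm]

/-! ### Schur's lemma consequences -/

lemma schur_scalar (V : FDRep ℂ G) [Simple V] (f : Module.End ℂ V)
    (hf : ∀ g : G, V.ρ g * f = f * V.ρ g)
    (htr : LinearMap.trace ℂ V f = 0) : f = 0 := by
  classical
  set φ : V ⟶ V := ⟨FGModuleCat.ofHom f, fun g => by ext v; exact LinearMap.congr_fun (hf g).symm v⟩ with hφ
  have hid : (𝟙 V : V ⟶ V) ≠ 0 := id_nonzero V
  have h1 : Module.finrank ℂ (V ⟶ V) = 1 := by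
    rw [finrank_hom_simple_simple V V, if_pos ⟨Iso.refl V⟩]
  obtain ⟨c, hc⟩ := ((finrank_eq_one_iff_of_nonzero' (𝟙 V) hid).mp h1) φ
  have hfc : f = c • LinearMap.id := by
    have := congrArg (fun ψ : V ⟶ V => ψ.hom.hom.hom) hc
    exact this.symm
  have hd : (Module.finrank ℂ V : ℂ) ≠ 0 := by
    have hnt : Nontrivial V := by
      by_contra hn
      rw [not_nontrivial_iff_subsingleton] at hn
      haveI : Subsingleton ↑V.V.obj := hn
      exact hid (by ext v; exact Subsingleton.elim _ _)
    exact_mod_cast Module.finrank_pos.ne'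
  have hc0 : c * (Module.finrank ℂ V : ℂ) = 0 := by
    rw [hfc] at htr
    simpa [LinearMap.trace_id] using htr
  have : c = 0 := by
    rcases mul_eq_zero.mp hc0 with h | h
    · exact h
    · exact absurd h hd
  rw [hfc, this, zero_smul]

lemma zOp_eq_zero (V : FDRep ℂ G) [Simple V] (g g' : G)
    (hχ : V.character g = V.character g') :
    ((cls g').card : ℂ) • clOp V g - ((cls g).card : ℂ) • clOp V g' = 0 := by
  apply schur_scalar V _ ?_ ?_
  · intro y
    simp only [mul_sub, sub_mul, mul_smul_comm, smul_mul_assoc, clOp_comm]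
  · rw [map_sub, map_smul, map_smul, trace_clOp, trace_clOp, hχ, smul_eq_mul, smul_eq_mul]
    ring

/-! ### Building simple FDReps from invariant subspaces -/

lemma simple_of_invariant (V : FDRep ℂ G) (hnt : Nontrivial V)
    (hsub : ∀ U : Submodule ℂ V, (∀ g : G, ∀ v ∈ U, V.ρ g v ∈ U) → U = ⊥ ∨ U = ⊤) :
    Simple V := by
  constructor
  intro Y f hm
  constructor
  · intro hiso h0
    obtain ⟨v, hv⟩ := exists_ne (0 : V)
    apply hv
    have h1 : (𝟙 V : V ⟶ V) = 0 := by
      have h2 : f ≫ (𝟙 V) = f ≫ 0 := by rw [Category.comp_id, Limits.comp_zero, h0]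
      exact (cancel_epi f).mp h2
    have h := congrArg Action.Hom.hom h1
    simp only [Action.zero_hom, Action.id_hom] at h
    have := congrArg (fun (l : V.V ⟶ V.V) => l v) h
    exact this
  · intro hf0
    have hKinv : ∀ g : G, ∀ y ∈ LinearMap.ker f.hom.hom.hom, Y.ρ g y ∈ LinearMap.ker f.hom.hom.hom := by
      intro g y hy
      have hc := congrArg (fun (l : Y.V ⟶ V.V) => l y) (f.comm g)
      have hy' : f.hom y = 0 := hy
      change f.hom (Y.ρ g y) = 0
      change f.hom (Y.ρ g y) = V.ρ g (f.hom y) at hc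
      rw [hc, hy', map_zero]
    have hker : LinearMap.ker f.hom.hom.hom = ⊥ := by
      set K : Submodule ℂ Y := LinearMap.ker f.hom.hom.hom with hK
      set W : FDRep ℂ G := FDRep.of (V := K)
        { toFun := fun g => (Y.ρ g).restrict (hKinv g)
          map_one' := by ext v; simp [LinearMap.restrict_apply]
          map_mul' := fun g h => by ext v; simp [LinearMap.restrict_apply] } with hWdef
      set ι : W ⟶ Y := ⟨FGModuleCat.ofHom K.subtype, fun g => rfl⟩ with hι
      have hcomp : ι ≫ f = 0 := by
        apply Action.Hom.ext
        ext x
        change f.hom (K.subtype x) = 0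
        exact x.2
      have hι0 : ι = 0 := by
        have := hcomp.trans (Limits.zero_comp (X := W) (f := f)).symm
        exact (cancel_mono f).mp this
      ext y
      simp only [Submodule.mem_bot]
      constructor
      · intro hy
        have := congrArg Action.Hom.hom hι0
        have h2 := congrArg (fun (l : W.V ⟶ Y.V) => l ⟨y, hy⟩) this
        exact h2
      · intro hy; simp [hy]
    have hrange : LinearMap.range f.hom.hom.hom = ⊤ := by
      refine (hsub (LinearMap.range f.hom.hom.hom) ?_).resolve_left ?_
      · rintro g v ⟨y, rfl⟩
        refine ⟨Y.ρ g y, ?_⟩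
        have hc := f.comm g
        have := congrArg (fun (l : Y.V ⟶ V.V) => l y) hc
        exact this
      · intro hbot
        apply hf0
        apply Action.Hom.ext; ext y
        have : f.hom y ∈ LinearMap.range f.hom.hom.hom := ⟨y, rfl⟩
        rw [hbot] at this
        exact (Submodule.mem_bot ℂ).mp this
    have hbij : Function.Bijective f.hom.hom.hom :=
      ⟨LinearMap.ker_eq_bot.mp hker, LinearMap.range_eq_top.mp hrange⟩
    set e : Y.V.obj ≃ₗ[ℂ] V.V.obj := LinearEquiv.ofBijective f.hom.hom.hom hbij with he
    refine ⟨⟨⟨FGModuleCat.ofHom (e.symm : V.V.obj →ₗ[ℂ] Y.V.obj), ?_⟩, ?_, ?_⟩⟩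
    · intro g
      ext v
      change e.symm (V.ρ g v) = Y.ρ g (e.symm v)
      apply e.injective
      rw [e.apply_symm_apply]
      have hc := f.comm g
      have := congrArg (fun (l : Y.V ⟶ V.V) => l (e.symm v)) hc
      change f.hom (Y.ρ g (e.symm v)) = V.ρ g (f.hom (e.symm v)) at this
      symm
      change f.hom (Y.ρ g (e.symm v)) = _
      rw [this]
      congr 1
      exact e.apply_symm_apply v
    · apply Action.Hom.ext; ext y
      change e.symm (f.hom y) = y
      exact e.symm_apply_apply y
    · apply Action.Hom.ext; ext v
      change f.hom (e.symm v) = v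
      exact e.apply_symm_apply v

/-! ### Class sums in the monoid algebra -/

def clsum (g : G) : MonoidAlgebra ℂ G := ∑ x ∈ cls g, single x 1

lemma clsum_comm_single (w y : G) : single y (1:ℂ) * clsum w = clsum w * single y 1 := by
  rw [clsum, Finset.mul_sum, Finset.sum_mul]
  refine Finset.sum_nbij' (fun x => y * x * y⁻¹) (fun x => y⁻¹ * x * y) ?_ ?_ ?_ ?_ ?_
  · intro x hx; obtain ⟨c, rfl⟩ := mem_cls.mp hx; exact mem_cls.mpr ⟨y * c, by group⟩
  · intro x hx; obtain ⟨c, rfl⟩ := mem_cls.mp hx; exact mem_cls.mpr ⟨y⁻¹ * c, by group⟩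
  · intro x _; group
  · intro x _; group
  · intro x _
    simp only [single_mul_single, mul_one, one_mul]
    congr 1
    group

lemma clsum_comm (w : G) (a : MonoidAlgebra ℂ G) : a * clsum w = clsum w * a := by
  induction a using MonoidAlgebra.induction_linear with
  | zero => simp
  | add f g hf hg => rw [add_mul, mul_add, hf, hg]
  | single y c =>
      show (single y c : MonoidAlgebra ℂ G) * clsum w = clsum w * single y c
      have h1 : (single y c : MonoidAlgebra ℂ G) = c • single y (1:ℂ) := by
        rw [MonoidAlgebra.smul_single', mul_one]
      rw [h1, smul_mul_assoc, mul_smul_comm, clsum_comm_single]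

open Classical in
lemma clsum_apply (w x : G) : (clsum w).coeff x = if x ∈ cls w then (1:ℂ) else 0 := by
  rw [clsum, coeff_sum]
  rw [Finset.sum_apply']
  simp only [coeff_single, Finsupp.single_apply]
  rw [Finset.sum_ite_eq' (cls w) x (fun _ => (1:ℂ))]

/-! ### Submodules of the group algebra as representations -/

instance : FiniteDimensional ℂ (MonoidAlgebra ℂ G) :=
  Module.Finite.equiv (MonoidAlgebra.coeffLinearEquiv ℂ).symm

instance (S : Submodule (MonoidAlgebra ℂ G) (MonoidAlgebra ℂ G)) :
    FiniteDimensional ℂ ↥S :=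
  inferInstanceAs (FiniteDimensional ℂ ↥(S.restrictScalars ℂ))

def modRep (S : Submodule (MonoidAlgebra ℂ G) (MonoidAlgebra ℂ G)) :
    Representation ℂ G ↥S where
  toFun g :=
    { toFun := fun s => ⟨single g 1 * (s : MonoidAlgebra ℂ G), by
        simpa [smul_eq_mul] using S.smul_mem (single g (1:ℂ)) s.2⟩
      map_add' := fun s t => by ext; simp [mul_add]
      map_smul' := fun c s => by ext; simp [mul_smul_comm] }
  map_one' := by ext s; simp [one_def]
  map_mul' g h := by
    ext s
    simp [single_mul_single, mul_assoc]

lemma modRep_apply (S : Submodule (MonoidAlgebra ℂ G) (MonoidAlgebra ℂ G)) (g : G) (s : ↥S) :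
    ((modRep S g s : ↥S) : MonoidAlgebra ℂ G) = single g 1 * (s : MonoidAlgebra ℂ G) := rfl

def modFDRep (S : Submodule (MonoidAlgebra ℂ G) (MonoidAlgebra ℂ G)) : FDRep ℂ G :=
  FDRep.of (modRep S)

lemma modFDRep_simple (S : Submodule (MonoidAlgebra ℂ G) (MonoidAlgebra ℂ G))
    (hS : IsSimpleModule (MonoidAlgebra ℂ G) ↥S) :
    Simple (modFDRep S) := by
  haveI := hS
  have hnt : Nontrivial ↥S := IsSimpleModule.nontrivial (MonoidAlgebra ℂ G) ↥S
  refine simple_of_invariant _ hnt ?_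
  intro U hU
  set U' : Submodule (MonoidAlgebra ℂ G) ↥S :=
    { carrier := {x : ↥S | x ∈ U}
      add_mem' := fun ha hb => U.add_mem ha hb
      zero_mem' := U.zero_mem
      smul_mem' := by
        intro a u hu
        simp only [Set.mem_setOf_eq] at hu ⊢
        induction a using MonoidAlgebra.induction_linear with
        | zero =>
            have : ((0 : MonoidAlgebra ℂ G) • u) = (0 : ↥S) := zero_smul _ u
            rw [this]; exact U.zero_mem
        | add f g hf hg => rw [add_smul]; exact U.add_mem hf hg
        | single y c =>
            show (single y c : MonoidAlgebra ℂ G) • u ∈ U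
            have h1 : ((single y c : MonoidAlgebra ℂ G) • u) = c • (modRep S y u) := by
              apply Subtype.ext
              show (single y c : MonoidAlgebra ℂ G) * (u : MonoidAlgebra ℂ G)
                  = c • ((single y 1 : MonoidAlgebra ℂ G) * (u : MonoidAlgebra ℂ G))
              rw [← smul_mul_assoc]
              congr 1
              rw [MonoidAlgebra.smul_single', mul_one]
            rw [h1]
            exact U.smul_mem c (hU y u hu) } with hU'
  rcases eq_bot_or_eq_top U' with h | h
  · left
    ext x
    have h2 : x ∈ U ↔ x ∈ U' := Iff.rfl
    rw [h2, h]
    rfl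
  · right
    ext x
    have h2 : x ∈ U ↔ x ∈ U' := Iff.rfl
    rw [h2, h]
    exact ⟨fun _ => trivial, fun _ => trivial⟩

/-- coercion helper -/
def toA (S : Submodule (MonoidAlgebra ℂ G) (MonoidAlgebra ℂ G)) (x : ↥S) :
    MonoidAlgebra ℂ G := x

lemma toA_sub (S : Submodule (MonoidAlgebra ℂ G) (MonoidAlgebra ℂ G)) (x y : ↥S) :
    toA S (x - y) = toA S x - toA S y := rfl

lemma toA_smul (S : Submodule (MonoidAlgebra ℂ G) (MonoidAlgebra ℂ G)) (c : ℂ) (x : ↥S) :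
    toA S (c • x) = c • toA S x := rfl

lemma clOp_modFDRep (S : Submodule (MonoidAlgebra ℂ G) (MonoidAlgebra ℂ G)) (g : G) (s : ↥S) :
    toA S (clOp (modFDRep S) g s) = clsum g * (s : MonoidAlgebra ℂ G) := by
  have h1 : clOp (modFDRep S) g s = ∑ x ∈ cls g, modRep S x s := by
    rw [clOp]; exact LinearMap.sum_apply _ _ _
  rw [h1, clsum, Finset.sum_mul]
  rw [show toA S (∑ x ∈ cls g, modRep S x s) = ∑ x ∈ cls g, toA S (modRep S x s) from
    map_sum (S.subtype) _ _]
  exact Finset.sum_congr rfl fun x _ => modRep_apply S x s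

end

end CaminaAux

theorem camina_pair_of_vanishing {G : Type} [Group G] [Fintype G]
    (N : Subgroup G) [N.Normal] (hbot : N ≠ ⊥) (htop : N ≠ ⊤)
    (h : ∀ V : FDRep ℂ G, Simple V → ¬((N : Set G) ⊆ charKer V) →
      ∀ g : G, g ∉ N → V.character g = 0) :
    ∀ g : G, g ∉ N → ∀ n ∈ N, IsConj g (g * n) := by
  classical
  open CaminaAux MonoidAlgebra in
  intro g hg n hn
  set g' := g * n with hg'
  have hg'N : g' ∉ N := by
    intro hmem
    apply hg
    have hgeq : g = g' * n⁻¹ := by rw [hg']; group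
    rw [hgeq]
    exact N.mul_mem hmem (N.inv_mem hn)
  -- every simple character agrees at g and g'
  have hchar : ∀ V : FDRep ℂ G, Simple V → V.character g = V.character g' := by
    intro V hV
    by_cases hk : (N : Set G) ⊆ charKer V
    · have hker : ∀ m ∈ N, V.character m = V.character 1 := fun m hm => hk hm
      exact (char_mul_of_charKer V N hker hn g).symm
    · haveI := hV
      rw [h V hV hk g hg, h V hV hk g' hg'N]
  -- the central element
  set a : ℂ := ((cls g').card : ℂ) with ha
  set b : ℂ := ((cls g).card : ℂ) with hb
  set z : MonoidAlgebra ℂ G := a • clsum g - b • clsum g' with hz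
  have hzcomm : ∀ x : MonoidAlgebra ℂ G, z * x = x * z := by
    intro x
    rw [hz, sub_mul, mul_sub, smul_mul_assoc, smul_mul_assoc, mul_smul_comm, mul_smul_comm,
      clsum_comm, clsum_comm]
  -- z annihilates every simple submodule of the group algebra
  have hzann : ∀ S : Submodule (MonoidAlgebra ℂ G) (MonoidAlgebra ℂ G),
      IsSimpleModule (MonoidAlgebra ℂ G) ↥S → ∀ s ∈ S, z * s = 0 := by
    intro S hS s hs
    haveI : Simple (modFDRep S) := modFDRep_simple S hS
    have h0 := zOp_eq_zero (modFDRep S) g g' (hchar _ inferInstance)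
    have h1 := congrArg (fun (l : Module.End ℂ (modFDRep S)) => l ⟨s, hs⟩) h0
    have h2 : a • clOp (modFDRep S) g ⟨s, hs⟩ - b • clOp (modFDRep S) g' ⟨s, hs⟩ = 0 := by
      exact h1
    have h3 := congrArg (toA S) h2
    change a • toA S (clOp (modFDRep S) g ⟨s, hs⟩) - b • toA S (clOp (modFDRep S) g' ⟨s, hs⟩) = toA S 0 at h3
    rw [clOp_modFDRep, clOp_modFDRep] at h3
    rw [show toA S 0 = 0 from rfl] at h3
    rw [hz, sub_mul, smul_mul_assoc, smul_mul_assoc]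
    exact h3
  -- hence z = 0 by semisimplicity
  haveI : NeZero ((Fintype.card G : ℂ)) := ⟨by exact_mod_cast Fintype.card_ne_zero⟩
  have hz0 : z = 0 := by
    set Z : Submodule (MonoidAlgebra ℂ G) (MonoidAlgebra ℂ G) :=
      { carrier := {x | z * x = 0}
        add_mem' := fun {p q} hp hq => by
          simp only [Set.mem_setOf_eq] at *
          rw [mul_add, hp, hq, add_zero]
        zero_mem' := by simp
        smul_mem' := by
          intro c x hx
          simp only [Set.mem_setOf_eq] at hx ⊢
          rw [smul_eq_mul, ← mul_assoc, hzcomm c, mul_assoc, hx, mul_zero] } with hZ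
    have hle : sSup {m : Submodule (MonoidAlgebra ℂ G) (MonoidAlgebra ℂ G) |
        IsSimpleModule (MonoidAlgebra ℂ G) ↥m} ≤ Z := by
      apply sSup_le
      intro S hS
      intro s hs
      exact hzann S hS s hs
    rw [IsSemisimpleModule.sSup_simples_eq_top] at hle
    have h1 : (1 : MonoidAlgebra ℂ G) ∈ Z := hle Submodule.mem_top
    have h2 : z * 1 = 0 := h1
    rwa [mul_one] at h2
  -- evaluate the coefficient at g
  have hcoeff := congrArg (fun (x : MonoidAlgebra ℂ G) => x.coeff g) hz0
  rw [hz] at hcoeff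
  have e1 : a * (clsum g).coeff g - b * (clsum g').coeff g = 0 := by
    have e2 : ((a • clsum g - b • clsum g' : MonoidAlgebra ℂ G)).coeff g
        = a * (clsum g).coeff g - b * (clsum g').coeff g := by
      rfl
    rw [← e2]
    simpa using hcoeff
  rw [clsum_apply, clsum_apply, if_pos (self_mem_cls g)] at e1
  by_cases hmem : g ∈ cls g'
  · obtain ⟨c, hc⟩ := mem_cls.mp hmem
    exact (isConj_iff.mpr ⟨c, hc⟩).symm
  · rw [if_neg hmem] at e1
    have ha0 : a = 0 := by
      simp only [mul_one, mul_zero, sub_zero] at e1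
      exact e1
    rw [ha] at ha0
    have hcard : (cls g').card ≠ 0 := Finset.card_ne_zero_of_mem (self_mem_cls g')
    exact absurd (by exact_mod_cast ha0) hcard
end
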